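/- For an integral basis {X_i, Z_k} of a pseudo H-type algebra, writing [X_i, X_j] = Σ_k c_{ij}^k Z_k, the structure constant c_{ij}^k is nonzero for at most one index k, and when nonzero it equals ±1. -/
import Mathlib


open scoped BigOperators

/-- The signature-(r,s) scalar product on `ℝ^{r+s}`. -/
noncomputable def sig (r s : ℕ) (z z' : Fin (r + s) → ℝ) : ℝ :=
  ∑ i : Fin (r + s), (if (i : ℕ) < r then (1 : ℝ) else -1) * z i * z' i

/-- For an integral basis `{X_i, Z_k}` of a pseudo H-type algebra, writing
`[X_i, X_j] = Σ_k c_{ij}^k Z_k`, the structure constant `c_{ij}^k` is nonzero for at most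
one index `k`, and when nonzero it equals `±1`. -/
theorem statement4 {r s N : ℕ} (hs : 0 < s) {V : Type*} [AddCommGroup V] [Module ℝ V]
    (B : LinearMap.BilinForm ℝ V)
    (hBsymm : ∀ X Y : V, B X Y = B Y X)
    (J : (Fin (r + s) → ℝ) →ₗ[ℝ] (V →ₗ[ℝ] V))
    (hCl : ∀ z z' : Fin (r + s) → ℝ,
      J z ∘ₗ J z' + J z' ∘ₗ J z = (-2 * sig r s z z') • (LinearMap.id : V →ₗ[ℝ] V))
    (hskew : ∀ (z : Fin (r + s) → ℝ) (X Y : V), B (J z X) Y + B X (J z Y) = 0)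
    (Z : Fin (r + s) → (Fin (r + s) → ℝ))
    (hZ : ∀ k l, sig r s (Z k) (Z l)
      = if k = l then (if (k : ℕ) < r then 1 else -1) else 0)
    (X : Fin (2 * N) → V)
    (hX : ∀ i j, B (X i) (X j) = if i = j then (if (i : ℕ) < N then 1 else -1) else 0)
    (hint : ∀ (k : Fin (r + s)) (i : Fin (2 * N)),
      ∃ j, j ≠ i ∧ (J (Z k) (X i) = X j ∨ J (Z k) (X i) = - X j))
    -- the structure constants c_{ij}^k, determined by
    -- ⟨J_{Z_k} X_i, X_j⟩_V = ⟨Z_k, [X_i, X_j]⟩_{r,s} = ±c_{ij}^k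
    (c : Fin (2 * N) → Fin (2 * N) → Fin (r + s) → ℝ)
    (hc : ∀ i j k, B (J (Z k) (X i)) (X j)
      = (if (k : ℕ) < r then (1 : ℝ) else -1) * c i j k) :
    ∀ i j : Fin (2 * N),
      (∀ k, c i j k = 0 ∨ c i j k = 1 ∨ c i j k = -1) ∧
      (∀ k l, c i j k ≠ 0 → c i j l ≠ 0 → k = l) := by
  intro i j
  -- key fact: if c i j k ≠ 0 then J (Z k) (X i) = ± X j
  have key : ∀ k : Fin (r + s), c i j k ≠ 0 →
      J (Z k) (X i) = X j ∨ J (Z k) (X i) = - X j := by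
    intro k hk
    obtain ⟨m, hm, hJ⟩ := hint k i
    have hb : B (J (Z k) (X i)) (X j) ≠ 0 := by
      rw [hc i j k]
      rcases lt_or_ge (k : ℕ) r with h | h
      · simp [h, hk]
      · simp [not_lt.mpr h, hk]
    have hmj : m = j := by
      by_contra hmj
      apply hb
      rcases hJ with hJ | hJ <;> rw [hJ] <;> simp [hX, hmj]
    rw [hmj] at hJ
    exact hJ
  constructor
  · intro k
    obtain ⟨m, hm, hJ⟩ := hint k i
    have hb : B (J (Z k) (X i)) (X j) = 0 ∨ B (J (Z k) (X i)) (X j) = 1 ∨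
        B (J (Z k) (X i)) (X j) = -1 := by
      rcases hJ with hJ | hJ <;> rw [hJ]
      · by_cases hmj : m = j
        · subst hmj; by_cases hN : (m : ℕ) < N <;> simp [hX, hN]
        · simp [hX, hmj]
      · by_cases hmj : m = j
        · subst hmj; by_cases hN : (m : ℕ) < N <;> simp [hX, hN]
        · simp [hX, hmj]
    rw [hc i j k] at hb
    rcases lt_or_ge (k : ℕ) r with h | h
    · simpa [h] using hb
    · have h' := hb
      simp only [not_lt.mpr h, if_false, neg_mul, one_mul, neg_eq_zero] at h'
      rcases h' with h' | h' | h'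
      · exact Or.inl h'
      · right; right; linarith
      · right; left; linarith
  · intro k l hk hl
    by_contra hkl
    have hJk := key k hk
    have hJl := key l hl
    -- A := B (J (Z k) (X i)) (J (Z l) (X i)) is nonzero from hJk, hJl, yet zero from Clifford
    have hA0 : B (J (Z k) (X i)) (J (Z l) (X i)) = 0 := by
      have e1 := hskew (Z k) (X i) (J (Z l) (X i))
      have e2 := hskew (Z l) (X i) (J (Z k) (X i))
      have e3 : B (J (Z l) (X i)) (J (Z k) (X i))
          = B (J (Z k) (X i)) (J (Z l) (X i)) := hBsymm _ _
      have hcl := hCl (Z k) (Z l)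
      have hsig : sig r s (Z k) (Z l) = 0 := by rw [hZ k l, if_neg hkl]
      have e4 : J (Z k) (J (Z l) (X i)) + J (Z l) (J (Z k) (X i)) = 0 := by
        have := congrArg (fun f => f (X i)) hcl
        simpa [hsig, LinearMap.add_apply, LinearMap.comp_apply] using this
      have e5 : B (X i) (J (Z k) (J (Z l) (X i)) + J (Z l) (J (Z k) (X i))) = 0 := by
        rw [e4]; simp
      rw [map_add] at e5
      linarith
    have hBjj : B (X j) (X j) ≠ 0 := by
      rw [hX j j]
      by_cases hN : (j : ℕ) < N <;> simp [hN]
    apply hBjj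
    rcases hJk with h1 | h1 <;> rcases hJl with h2 | h2 <;> rw [h1, h2] at hA0 <;>
      simpa using hA0
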